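/- Let p be a prime, M a module over 𝔽_p = ℤ/pℤ, and f_0, …, f_{e−1} pairwise commuting 𝔽_p-linear endomorphisms of M satisfying f_i^p = f_i for each i. For each α = (α_0, …, α_{e−1}) ∈ 𝔽_p^e let M_α = ⋂_{i<e} ker(f_i − α_i·id) be the corresponding simultaneous eigenspace. Then M is the internal direct sum of the submodules M_α over all α ∈ 𝔽_p^e; that is, the M_α are independent and their sum is all of M. (Proposition 3.1(g) / Lemma 5.3.) -/
import Mathlib

open Polynomial

lemma prod_X_sub_C_zmod (p : ℕ) [Fact p.Prime] :
    ∏ c : ZMod p, (X - C c) = X ^ p - X := by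
  have h1 : (X ^ p - X : (ZMod p)[X]).roots = Finset.univ.val := by
    have := FiniteField.roots_X_pow_card_sub_X (ZMod p)
    rwa [ZMod.card] at this
  have hm : (X ^ p - X : (ZMod p)[X]).Monic := by
    apply (monic_X_pow p).sub_of_left
    rw [degree_X_pow, degree_X]
    exact_mod_cast (Fact.out : p.Prime).one_lt
  have hd : (X ^ p - X : (ZMod p)[X]).natDegree = p :=
    FiniteField.X_pow_card_sub_X_natDegree_eq _ (Fact.out : p.Prime).one_lt
  have := prod_multiset_X_sub_C_of_monic_of_roots_card_eq hm
    (by rw [h1, hd]; simp [ZMod.card])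
  rw [h1] at this
  rw [← this, Finset.prod_eq_multiset_prod]

lemma sum_lag (p : ℕ) [Fact p.Prime] :
    ∑ c : ZMod p, Lagrange.basis Finset.univ id c = 1 :=
  Lagrange.sum_basis (Set.injOn_id _) Finset.univ_nonempty

lemma mul_lag {p : ℕ} [Fact p.Prime] {B : Type*} [CommRing B] [Algebra (ZMod p) B]
    (b : B) (hb : b ^ p = b) (c : ZMod p) :
    (b - algebraMap (ZMod p) B c) * aeval b (Lagrange.basis Finset.univ id c) = 0 := by
  have key : (X - C c) * Lagrange.basis Finset.univ id c
      = C (∏ d ∈ Finset.univ.erase c, (c - d)⁻¹) * (X ^ p - X) := by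
    unfold Lagrange.basis Lagrange.basisDivisor
    rw [Finset.prod_mul_distrib, ← map_prod, ← prod_X_sub_C_zmod p,
      ← Finset.mul_prod_erase Finset.univ (fun d => X - C d) (Finset.mem_univ c)]
    simp only [id_eq]; ring
  have := congrArg (aeval b) key
  simpa [sub_eq_zero.mpr hb] using this

set_option synthInstance.maxHeartbeats 1000000 in
set_option maxHeartbeats 1000000 in
/-- Proposition 3.1(g) / Lemma 5.3: if `f_0, …, f_{e-1}` are pairwise commuting `𝔽_p`-linear
endomorphisms of `M` with `f_i^p = f_i`, then `M` is the internal direct sum of the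
simultaneous eigenspaces `M_α = ⋂_i ker (f_i - α_i)` over `α ∈ 𝔽_p^e`. -/
theorem multiEigenspace_decomposition (p : ℕ) (hp : p.Prime) (e : ℕ)
    (M : Type*) [AddCommGroup M] [Module (ZMod p) M]
    (f : Fin e → Module.End (ZMod p) M)
    (hcomm : ∀ i j, f i * f j = f j * f i)
    (hpow : ∀ i, f i ^ p = f i) :
    (iSupIndep fun α : Fin e → ZMod p =>
      ⨅ i, LinearMap.ker (f i - α i • (1 : Module.End (ZMod p) M))) ∧
    (⨆ α : Fin e → ZMod p,
      ⨅ i, LinearMap.ker (f i - α i • (1 : Module.End (ZMod p) M))) = ⊤ := by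
  haveI := Fact.mk hp
  constructor
  · have h1 : iSupIndep fun α : Fin e → ZMod p =>
        ⨅ i, (f i).maxGenEigenspace (α i) :=
      Module.End.independent_iInf_maxGenEigenspace_of_forall_mapsTo f
        (fun i j φ => Module.End.mapsTo_maxGenEigenspace_of_comm (hcomm j i) φ)
    refine h1.mono fun α => iInf_mono fun i => ?_
    intro x hx
    exact (Module.End.mem_maxGenEigenspace _ _ _).2 ⟨1, by simpa using hx⟩
  · -- the commutative subalgebra
    letI A := Algebra.adjoin (ZMod p) (Set.range f)
    letI : CommRing A := Algebra.adjoinCommRingOfComm _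
      (by rintro a ⟨i, rfl⟩ b ⟨j, rfl⟩; exact hcomm i j)
    set g : Fin e → A := fun i => ⟨f i, Algebra.subset_adjoin ⟨i, rfl⟩⟩ with hgdef
    have hg : ∀ i, g i ^ p = g i := fun i => Subtype.ext (by
      simpa using hpow i)
    set π : Fin e → ZMod p → A :=
      fun i c => aeval (g i) (Lagrange.basis Finset.univ id c) with hπ
    have key1 : ∀ i, ∑ c : ZMod p, π i c = 1 := fun i => by
      rw [hπ, ← map_sum, sum_lag p, map_one]
    have key2 : ∀ i c, (g i - algebraMap (ZMod p) A c) * π i c = 0 :=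
      fun i c => mul_lag (g i) (hg i) c
    have hone : ∑ α : Fin e → ZMod p, ∏ i, π i (α i) = (1 : A) := by
      rw [← Fintype.piFinset_univ, ← Finset.prod_univ_sum]
      simp [key1]
    rw [eq_top_iff]
    intro x _
    have hx : x = ∑ α : Fin e → ZMod p, ((∏ i, π i (α i) : A) : Module.End (ZMod p) M) x := by
      have := congrArg (fun a : A => (a : Module.End (ZMod p) M) x) hone
      simpa using this.symm
    rw [hx]
    refine Submodule.sum_mem _ fun α _ => ?_
    refine Submodule.mem_iSup_of_mem α ?_
    rw [Submodule.mem_iInf]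
    intro i
    rw [LinearMap.mem_ker]
    have hz : (g i - algebraMap (ZMod p) A (α i)) * ∏ j, π j (α j) = 0 := by
      rw [← Finset.mul_prod_erase Finset.univ (fun j => π j (α j)) (Finset.mem_univ i),
        ← mul_assoc, key2, zero_mul]
    have := congrArg (fun a : A => (a : Module.End (ZMod p) M) x) hz
    simp only [Subalgebra.coe_mul, ZeroMemClass.coe_zero] at this
    have hval : ((g i - algebraMap (ZMod p) A (α i) : A) : Module.End (ZMod p) M)
        = f i - α i • 1 := by
      simp [hgdef, Algebra.algebraMap_eq_smul_one]
    rw [hval] at this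
    simpa using this
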